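/- Let λ : ℝ² → ℝ be differentiable, let σ : ℝ² → ℝ^{2×2}, and fix q ∈ ℝ² with λ(q) > 0. Then there exist a 2×2 matrix M(q), namely M(q) = λ(q)^{-3}·[[2β₀(q)−β₁(q), −β₂(q)], [−β₂(q), 2β₀(q)+β₁(q)]], and for each ε > 0 a 2×2 matrix R^ε(q) such that the noise-induced drift satisfies S^ε(q) = (1/ε)·(β₀(q)/λ(q)²)·∇⊥λ(q) − M(q)·∇λ(q) + R^ε(q)·∇λ(q) for every ε > 0, and sup_{ε > 0} ε^{-1}·‖R^ε(q)‖ < ∞. -/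
import Mathlib


open Matrix

/-- The entrywise form of `Λ_ε(q)⁻¹ = (λ(q)²+ε²)⁻¹·[[ε, -λ(q)], [λ(q), ε]]`,
as a matrix-valued function of `q`. -/
noncomputable def LamInv (lam : (Fin 2 → ℝ) → ℝ) (ε : ℝ) (x : Fin 2 → ℝ) :
    Matrix (Fin 2) (Fin 2) ℝ :=
  ((lam x) ^ 2 + ε ^ 2)⁻¹ • !![ε, -(lam x); lam x, ε]

/-- The matrix `J^ε(q)` with the explicit entries computed from the Lyapunov
equation. -/
noncomputable def Jmat (β₀ β₁ β₂ lam ε : ℝ) : Matrix (Fin 2) (Fin 2) ℝ :=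
  !![β₀ / ε + β₁ * ε / (lam ^ 2 + ε ^ 2) - β₂ * lam / (lam ^ 2 + ε ^ 2),
     β₁ * lam / (lam ^ 2 + ε ^ 2) + β₂ * ε / (lam ^ 2 + ε ^ 2);
     β₁ * lam / (lam ^ 2 + ε ^ 2) + β₂ * ε / (lam ^ 2 + ε ^ 2),
     β₀ / ε - β₁ * ε / (lam ^ 2 + ε ^ 2) + β₂ * lam / (lam ^ 2 + ε ^ 2)]

/-- The matrix `M(q) = λ(q)⁻³·[[2β₀−β₁, −β₂], [−β₂, 2β₀+β₁]]`. -/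
noncomputable def Mmat (β₀ β₁ β₂ lam : ℝ) : Matrix (Fin 2) (Fin 2) ℝ :=
  (lam ^ 3)⁻¹ • !![2 * β₀ - β₁, -β₂; -β₂, 2 * β₀ + β₁]

set_option maxHeartbeats 4000000 in
/-- There exist a matrix `M(q)` (the explicit `Mmat`) and, for each `ε > 0`, a
matrix `R^ε(q)` such that the noise-induced drift satisfies
`S^ε(q) = (1/ε)·(β₀/λ(q)²)·∇⊥λ(q) − M(q)·∇λ(q) + R^ε(q)·∇λ(q)` for every
`ε > 0`, with `sup_{ε>0} ε⁻¹·‖R^ε(q)‖ < ∞`. -/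
theorem noise_induced_drift_decomposition_exists
    (lam : (Fin 2 → ℝ) → ℝ) (hdiff : Differentiable ℝ lam)
    (σ : (Fin 2 → ℝ) → Matrix (Fin 2) (Fin 2) ℝ)
    (q : Fin 2 → ℝ) (hpos : 0 < lam q)
    (a₀ a₁ a₂ : ℝ) (ha : σ q * (σ q)ᵀ = !![a₁, a₀; a₀, a₂])
    (β₀ β₁ β₂ : ℝ) (hβ₀ : β₀ = (a₁ + a₂) / 4) (hβ₁ : β₁ = (a₁ - a₂) / 4)
    (hβ₂ : β₂ = a₀ / 2)
    (S : ℝ → Fin 2 → ℝ)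
    (hS : ∀ ε : ℝ, S ε = fun j => ∑ i : Fin 2, ∑ l : Fin 2,
      fderiv ℝ (fun x => LamInv lam ε x j l) q (Pi.single i 1) *
        Jmat β₀ β₁ β₂ (lam q) ε l i)
    (grad gradPerp : Fin 2 → ℝ)
    (hgrad : grad = fun i => fderiv ℝ lam q (Pi.single i 1))
    (hgradPerp : gradPerp = ![grad 1, -grad 0]) :
    ∃ R : ℝ → Matrix (Fin 2) (Fin 2) ℝ,
      (∀ ε : ℝ, 0 < ε → ∀ j : Fin 2,
        S ε j = (1 / ε) * (β₀ / (lam q) ^ 2) * gradPerp j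
          - (Mmat β₀ β₁ β₂ (lam q)).mulVec grad j
          + (R ε).mulVec grad j) ∧
      ∃ C : ℝ, ∀ ε : ℝ, 0 < ε → ∀ i j : Fin 2, |R ε i j| ≤ C * ε := by
  set c := lam q with hcdef
  have hc : (0:ℝ) < c := hpos
  have hc0 : c ≠ 0 := ne_of_gt hc
  set L := fderiv ℝ lam q with hLdef
  have hlam : HasFDerivAt lam L q := (hdiff q).hasFDerivAt
  refine ⟨fun ε =>
    !![β₀ * (2 * ε ^ 2 * (2 * c ^ 2 + ε ^ 2) / (c ^ 3 * (c ^ 2 + ε ^ 2) ^ 2))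
        - β₁ * (ε ^ 2 * (6 * c ^ 4 + 3 * c ^ 2 * ε ^ 2 + ε ^ 4) / (c ^ 3 * (c ^ 2 + ε ^ 2) ^ 3))
        - β₂ * (ε * (ε ^ 2 - 3 * c ^ 2) / ((c ^ 2 + ε ^ 2) ^ 3)),
      -β₀ * (ε * (3 * c ^ 2 + ε ^ 2) / (c ^ 2 * (c ^ 2 + ε ^ 2) ^ 2))
        + β₁ * (ε * (ε ^ 2 - 3 * c ^ 2) / ((c ^ 2 + ε ^ 2) ^ 3))
        - β₂ * (ε ^ 2 * (6 * c ^ 4 + 3 * c ^ 2 * ε ^ 2 + ε ^ 4) / (c ^ 3 * (c ^ 2 + ε ^ 2) ^ 3));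
      β₀ * (ε * (3 * c ^ 2 + ε ^ 2) / (c ^ 2 * (c ^ 2 + ε ^ 2) ^ 2))
        + β₁ * (ε * (ε ^ 2 - 3 * c ^ 2) / ((c ^ 2 + ε ^ 2) ^ 3))
        - β₂ * (ε ^ 2 * (6 * c ^ 4 + 3 * c ^ 2 * ε ^ 2 + ε ^ 4) / (c ^ 3 * (c ^ 2 + ε ^ 2) ^ 3)),
      β₀ * (2 * ε ^ 2 * (2 * c ^ 2 + ε ^ 2) / (c ^ 3 * (c ^ 2 + ε ^ 2) ^ 2))
        + β₁ * (ε ^ 2 * (6 * c ^ 4 + 3 * c ^ 2 * ε ^ 2 + ε ^ 4) / (c ^ 3 * (c ^ 2 + ε ^ 2) ^ 3))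
        + β₂ * (ε * (ε ^ 2 - 3 * c ^ 2) / ((c ^ 2 + ε ^ 2) ^ 3))], ?_, ?_⟩
  · -- the identity
    intro ε hε j
    have hεne : ε ≠ 0 := ne_of_gt hε
    have hDne : c * c + ε ^ 2 ≠ 0 := by positivity
    have hD2ne : c ^ 2 + ε ^ 2 ≠ 0 := by positivity
    have hD : HasFDerivAt (fun x => lam x * lam x + ε ^ 2) (c • L + c • L) q :=
      (hlam.mul hlam).add_const _
    have hI : HasFDerivAt (fun x => (lam x * lam x + ε ^ 2)⁻¹)
        ((-((c * c + ε ^ 2) ^ 2)⁻¹ : ℝ) • (c • L + c • L)) q :=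
      (hasDerivAt_inv hDne).comp_hasFDerivAt q hD
    have e00 : (fun x => LamInv lam ε x 0 0)
        = fun x => (lam x * lam x + ε ^ 2)⁻¹ * ε := by
      funext x; simp [LamInv, pow_two]
    have e01 : (fun x => LamInv lam ε x 0 1)
        = fun x => (lam x * lam x + ε ^ 2)⁻¹ * (-(lam x)) := by
      funext x; simp [LamInv, pow_two]
    have e10 : (fun x => LamInv lam ε x 1 0)
        = fun x => (lam x * lam x + ε ^ 2)⁻¹ * lam x := by
      funext x; simp [LamInv, pow_two]
    have e11 : (fun x => LamInv lam ε x 1 1)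
        = fun x => (lam x * lam x + ε ^ 2)⁻¹ * ε := by
      funext x; simp [LamInv, pow_two]
    have hf00 : fderiv ℝ (fun x => LamInv lam ε x 0 0) q
        = ε • ((-((c * c + ε ^ 2) ^ 2)⁻¹ : ℝ) • (c • L + c • L)) := by
      rw [e00]; exact (hI.mul_const ε).fderiv
    have hf01 : fderiv ℝ (fun x => LamInv lam ε x 0 1) q
        = (c * c + ε ^ 2)⁻¹ • (-L)
          + (-c) • ((-((c * c + ε ^ 2) ^ 2)⁻¹ : ℝ) • (c • L + c • L)) := by
      rw [e01]; exact (hI.mul hlam.neg).fderiv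
    have hf10 : fderiv ℝ (fun x => LamInv lam ε x 1 0) q
        = (c * c + ε ^ 2)⁻¹ • L
          + c • ((-((c * c + ε ^ 2) ^ 2)⁻¹ : ℝ) • (c • L + c • L)) := by
      rw [e10]; exact (hI.mul hlam).fderiv
    have hf11 : fderiv ℝ (fun x => LamInv lam ε x 1 1) q
        = ε • ((-((c * c + ε ^ 2) ^ 2)⁻¹ : ℝ) • (c • L + c • L)) := by
      rw [e11]; exact (hI.mul_const ε).fderiv
    have hg0 : L (Pi.single (0 : Fin 2) 1) = grad 0 := by simp [hgrad]
    have hg1 : L (Pi.single (1 : Fin 2) 1) = grad 1 := by simp [hgrad]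
    rw [hS]
    fin_cases j <;>
      simp only [Fin.sum_univ_two, Fin.isValue, Fin.zero_eta, Fin.mk_one, hf00, hf01, hf10, hf11,
        ContinuousLinearMap.add_apply, ContinuousLinearMap.smul_apply,
        ContinuousLinearMap.neg_apply, smul_eq_mul, hg0, hg1, Jmat, Mmat, Matrix.mulVec,
        dotProduct, hgradPerp, Matrix.smul_apply, Matrix.cons_val', Matrix.cons_val_zero,
        Matrix.cons_val_one, Matrix.head_cons, Matrix.head_fin_const, Matrix.empty_val',
        Matrix.cons_val_fin_one, Matrix.of_apply] <;>
      field_simp <;>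
      ring
  · -- the bound
    refine ⟨(|β₀| + |β₁| + |β₂|) * (3 / c ^ 4), ?_⟩
    intro ε hε i j
    have hDpos : (0:ℝ) < c ^ 2 + ε ^ 2 := by positivity
    have hE0 : |2 * ε ^ 2 * (2 * c ^ 2 + ε ^ 2) / (c ^ 3 * (c ^ 2 + ε ^ 2) ^ 2)|
        ≤ 3 * ε / c ^ 4 := by
      rw [abs_of_nonneg (by positivity), div_le_div_iff₀ (by positivity) (by positivity)]
      have key : 2 * ε * c * (2 * c ^ 2 + ε ^ 2) ≤ 3 * (c ^ 2 + ε ^ 2) ^ 2 := by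
        nlinarith [sq_nonneg (c - ε), sq_nonneg (ε * (c - ε)), sq_nonneg (c * (c - ε)),
          sq_nonneg c, sq_nonneg ε, mul_pos hc hε]
      nlinarith [mul_le_mul_of_nonneg_left key (show (0:ℝ) ≤ ε * c ^ 3 by positivity)]
    have hE1 : |ε * (3 * c ^ 2 + ε ^ 2) / (c ^ 2 * (c ^ 2 + ε ^ 2) ^ 2)|
        ≤ 3 * ε / c ^ 4 := by
      rw [abs_of_nonneg (by positivity), div_le_div_iff₀ (by positivity) (by positivity)]
      nlinarith [mul_pos hc hε, sq_nonneg (c * ε), pow_pos hε 2, pow_pos hc 2,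
        mul_pos (mul_pos hε hε) (mul_pos hε hε)]
    have hE2 : |ε * (ε ^ 2 - 3 * c ^ 2) / ((c ^ 2 + ε ^ 2) ^ 3)| ≤ 3 * ε / c ^ 4 := by
      rw [abs_div, abs_of_pos (pow_pos hDpos 3), abs_mul, abs_of_pos hε,
        div_le_div_iff₀ (by positivity) (by positivity)]
      have habs : |ε ^ 2 - 3 * c ^ 2| ≤ 3 * (c ^ 2 + ε ^ 2) := by
        rw [abs_le]; constructor <;> nlinarith [sq_nonneg c, sq_nonneg ε]
      have hc4 : c ^ 4 ≤ (c ^ 2 + ε ^ 2) ^ 2 := by nlinarith [sq_nonneg ε, sq_nonneg c]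
      calc ε * |ε ^ 2 - 3 * c ^ 2| * c ^ 4
          ≤ ε * (3 * (c ^ 2 + ε ^ 2)) * (c ^ 2 + ε ^ 2) ^ 2 := by
            apply mul_le_mul (mul_le_mul le_rfl habs (abs_nonneg _) hε.le) hc4
              (by positivity) (by positivity)
        _ = 3 * ε * (c ^ 2 + ε ^ 2) ^ 3 := by ring
    have hE3 : |ε ^ 2 * (6 * c ^ 4 + 3 * c ^ 2 * ε ^ 2 + ε ^ 4) / (c ^ 3 * (c ^ 2 + ε ^ 2) ^ 3)|
        ≤ 3 * ε / c ^ 4 := by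
      rw [abs_of_nonneg (by positivity), div_le_div_iff₀ (by positivity) (by positivity)]
      have key : ε * c * (6 * c ^ 4 + 3 * c ^ 2 * ε ^ 2 + ε ^ 4) ≤ 3 * (c ^ 2 + ε ^ 2) ^ 3 := by
        nlinarith [mul_nonneg (mul_nonneg (sq_nonneg c) (sq_nonneg c)) (sq_nonneg (c - ε)),
          mul_nonneg (mul_nonneg (sq_nonneg c) (sq_nonneg ε)) (sq_nonneg (c - ε)),
          mul_nonneg (mul_nonneg (sq_nonneg ε) (sq_nonneg ε)) (sq_nonneg (c - ε))]
      nlinarith [mul_le_mul_of_nonneg_left key (show (0:ℝ) ≤ ε * c ^ 3 by positivity)]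
    have key : ∀ x y z : ℝ, |x| ≤ 3 * ε / c ^ 4 → |y| ≤ 3 * ε / c ^ 4 → |z| ≤ 3 * ε / c ^ 4 →
        ∀ s₀ s₁ s₂ : ℝ, |s₀| = |β₀| → |s₁| = |β₁| → |s₂| = |β₂| →
        |s₀ * x + s₁ * y + s₂ * z| ≤ (|β₀| + |β₁| + |β₂|) * (3 / c ^ 4) * ε := by
      intro x y z hx hy hz s₀ s₁ s₂ h₀ h₁ h₂
      have tri : |s₀ * x + s₁ * y + s₂ * z| ≤ |s₀| * |x| + |s₁| * |y| + |s₂| * |z| := by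
        calc |s₀ * x + s₁ * y + s₂ * z| ≤ |s₀ * x + s₁ * y| + |s₂ * z| := abs_add_le _ _
          _ ≤ |s₀ * x| + |s₁ * y| + |s₂ * z| := by
              have := abs_add_le (s₀ * x) (s₁ * y); linarith
          _ = |s₀| * |x| + |s₁| * |y| + |s₂| * |z| := by rw [abs_mul, abs_mul, abs_mul]
      rw [h₀, h₁, h₂] at tri
      have h3 : (|β₀| + |β₁| + |β₂|) * (3 / c ^ 4) * ε
          = |β₀| * (3 * ε / c ^ 4) + |β₁| * (3 * ε / c ^ 4) + |β₂| * (3 * ε / c ^ 4) := by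
        ring
      rw [h3]
      have b0 := abs_nonneg β₀; have b1 := abs_nonneg β₁; have b2 := abs_nonneg β₂
      have := mul_le_mul_of_nonneg_left hx b0
      have := mul_le_mul_of_nonneg_left hy b1
      have := mul_le_mul_of_nonneg_left hz b2
      linarith
    fin_cases i <;> fin_cases j <;>
      simp only [Fin.isValue, Fin.zero_eta, Fin.mk_one, Matrix.cons_val', Matrix.cons_val_zero,
        Matrix.cons_val_one, Matrix.head_cons, Matrix.head_fin_const, Matrix.empty_val',
        Matrix.cons_val_fin_one, Matrix.of_apply]
    · have h := key _ _ _ hE0 hE3 hE2 β₀ (-β₁) (-β₂) rfl (abs_neg β₁) (abs_neg β₂)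
      calc |β₀ * (2 * ε ^ 2 * (2 * c ^ 2 + ε ^ 2) / (c ^ 3 * (c ^ 2 + ε ^ 2) ^ 2))
            - β₁ * (ε ^ 2 * (6 * c ^ 4 + 3 * c ^ 2 * ε ^ 2 + ε ^ 4) / (c ^ 3 * (c ^ 2 + ε ^ 2) ^ 3))
            - β₂ * (ε * (ε ^ 2 - 3 * c ^ 2) / ((c ^ 2 + ε ^ 2) ^ 3))|
          = |β₀ * (2 * ε ^ 2 * (2 * c ^ 2 + ε ^ 2) / (c ^ 3 * (c ^ 2 + ε ^ 2) ^ 2))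
            + (-β₁) * (ε ^ 2 * (6 * c ^ 4 + 3 * c ^ 2 * ε ^ 2 + ε ^ 4) / (c ^ 3 * (c ^ 2 + ε ^ 2) ^ 3))
            + (-β₂) * (ε * (ε ^ 2 - 3 * c ^ 2) / ((c ^ 2 + ε ^ 2) ^ 3))| := by ring_nf
        _ ≤ _ := h
    · have h := key _ _ _ hE1 hE2 hE3 (-β₀) β₁ (-β₂) (abs_neg β₀) rfl (abs_neg β₂)
      calc |(-β₀) * (ε * (3 * c ^ 2 + ε ^ 2) / (c ^ 2 * (c ^ 2 + ε ^ 2) ^ 2))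
            + β₁ * (ε * (ε ^ 2 - 3 * c ^ 2) / ((c ^ 2 + ε ^ 2) ^ 3))
            - β₂ * (ε ^ 2 * (6 * c ^ 4 + 3 * c ^ 2 * ε ^ 2 + ε ^ 4) / (c ^ 3 * (c ^ 2 + ε ^ 2) ^ 3))|
          = |(-β₀) * (ε * (3 * c ^ 2 + ε ^ 2) / (c ^ 2 * (c ^ 2 + ε ^ 2) ^ 2))
            + β₁ * (ε * (ε ^ 2 - 3 * c ^ 2) / ((c ^ 2 + ε ^ 2) ^ 3))
            + (-β₂) * (ε ^ 2 * (6 * c ^ 4 + 3 * c ^ 2 * ε ^ 2 + ε ^ 4) / (c ^ 3 * (c ^ 2 + ε ^ 2) ^ 3))| := by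
            ring_nf
        _ ≤ _ := h
    · have h := key _ _ _ hE1 hE2 hE3 β₀ β₁ (-β₂) rfl rfl (abs_neg β₂)
      calc |β₀ * (ε * (3 * c ^ 2 + ε ^ 2) / (c ^ 2 * (c ^ 2 + ε ^ 2) ^ 2))
            + β₁ * (ε * (ε ^ 2 - 3 * c ^ 2) / ((c ^ 2 + ε ^ 2) ^ 3))
            - β₂ * (ε ^ 2 * (6 * c ^ 4 + 3 * c ^ 2 * ε ^ 2 + ε ^ 4) / (c ^ 3 * (c ^ 2 + ε ^ 2) ^ 3))|
          = |β₀ * (ε * (3 * c ^ 2 + ε ^ 2) / (c ^ 2 * (c ^ 2 + ε ^ 2) ^ 2))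
            + β₁ * (ε * (ε ^ 2 - 3 * c ^ 2) / ((c ^ 2 + ε ^ 2) ^ 3))
            + (-β₂) * (ε ^ 2 * (6 * c ^ 4 + 3 * c ^ 2 * ε ^ 2 + ε ^ 4) / (c ^ 3 * (c ^ 2 + ε ^ 2) ^ 3))| := by
            ring_nf
        _ ≤ _ := h
    · exact key _ _ _ hE0 hE3 hE2 β₀ β₁ β₂ rfl rfl rfl
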